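/- arXiv:1805.06709 — 3 statements merged into one kernel-verified Lean document; each statement's English description precedes it below -/
import Mathlib

section
/- Let $\mu$ and $\nu$ be Borel measures on $(0,\infty)$ with $\int_0^\infty (1 \wedge x)\, d\mu(x) < \infty$ and $\int_0^\infty (1 \wedge x)\, d\nu(x) < \infty$. If $\int_0^\infty (1 - e^{-\beta x})\, d\mu(x) = \int_0^\infty (1 - e^{-\beta x})\, d\nu(x)$ for all $\beta > 0$, then $\mu = \nu$. -/
open MeasureTheory
open scoped ENNReal NNReal BoundedContinuousFunction

namespace BernsteinAux



/-- Pointwise bound. -/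
lemma ofReal_one_sub_exp_le {β : ℝ} (hβ : 0 < β) (x : ℝ) :
    ENNReal.ofReal (1 - Real.exp (-β * x)) ≤
      ENNReal.ofReal (max 1 β) * ENNReal.ofReal (min 1 x) := by
  rcases le_or_gt x 0 with hx | hx
  · have : 1 - Real.exp (-β * x) ≤ 0 := by
      have : (1:ℝ) ≤ Real.exp (-β * x) := by
        rw [Real.one_le_exp_iff]
        nlinarith
      linarith
    rw [neg_mul] at this
    simp [ENNReal.ofReal_eq_zero.mpr this]
  · rw [← ENNReal.ofReal_mul (le_trans zero_le_one (le_max_left 1 β))]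
    apply ENNReal.ofReal_le_ofReal
    have hexp : 1 - Real.exp (-β * x) ≤ β * x := by
      have := Real.add_one_le_exp (-β * x)
      linarith
    have hle1 : 1 - Real.exp (-β * x) ≤ 1 := by
      have := Real.exp_nonneg (-β * x)
      linarith
    rcases le_or_gt 1 x with hx1 | hx1
    · have : min 1 x = 1 := min_eq_left hx1
      rw [this, mul_one]
      exact le_trans hle1 (le_max_left 1 β)
    · have : min 1 x = x := min_eq_right hx1.le
      rw [this]
      calc 1 - Real.exp (-β * x) ≤ β * x := hexp
        _ ≤ max 1 β * x := by nlinarith [le_max_right 1 β]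

lemma restrict_Ioi_eq_self {μ : Measure ℝ} (hμs : μ (Set.Iic 0) = 0) :
    μ.restrict (Set.Ioi (0:ℝ)) = μ := by
  apply Measure.restrict_eq_self_of_ae_mem
  rw [ae_iff]
  convert hμs using 2
  ext x
  simp

lemma lintegral_one_sub_exp_lt_top {μ : Measure ℝ} (hμs : μ (Set.Iic 0) = 0)
    (hμ : ∫⁻ x in Set.Ioi (0:ℝ), ENNReal.ofReal (min 1 x) ∂μ < ⊤)
    {β : ℝ} (hβ : 0 < β) :
    ∫⁻ x, ENNReal.ofReal (1 - Real.exp (-β * x)) ∂μ < ⊤ := by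
  rw [restrict_Ioi_eq_self hμs] at hμ
  calc ∫⁻ x, ENNReal.ofReal (1 - Real.exp (-β * x)) ∂μ
      ≤ ∫⁻ x, ENNReal.ofReal (max 1 β) * ENNReal.ofReal (min 1 x) ∂μ :=
        lintegral_mono fun x => ofReal_one_sub_exp_le hβ x
    _ = ENNReal.ofReal (max 1 β) * ∫⁻ x, ENNReal.ofReal (min 1 x) ∂μ :=
        lintegral_const_mul _ ((measurable_const.min measurable_id).ennreal_ofReal)
    _ < ⊤ := ENNReal.mul_lt_top ENNReal.ofReal_lt_top hμ



lemma pointwise_split {β : ℝ} (hβ : 0 < β) (x : ℝ) :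
    ENNReal.ofReal (1 - Real.exp (-β * x)) +
      ENNReal.ofReal (Real.exp (-β * x) * (1 - Real.exp (-x))) =
    ENNReal.ofReal (1 - Real.exp (-(β + 1) * x)) := by
  have hprod : Real.exp (-(β+1) * x) = Real.exp (-β * x) * Real.exp (-x) := by
    rw [← Real.exp_add]; ring_nf
  rcases le_or_gt x 0 with hx | hx
  · have h1 : (1:ℝ) ≤ Real.exp (-β * x) := by rw [Real.one_le_exp_iff]; nlinarith
    have h2 : (1:ℝ) ≤ Real.exp (-x) := by rw [Real.one_le_exp_iff]; linarith
    have h3 : (1:ℝ) ≤ Real.exp (-(β+1) * x) := by rw [Real.one_le_exp_iff]; nlinarith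
    have e1 : 1 - Real.exp (-β * x) ≤ 0 := by linarith
    have e2 : Real.exp (-β * x) * (1 - Real.exp (-x)) ≤ 0 := by nlinarith [Real.exp_pos (-β*x)]
    have e3 : 1 - Real.exp (-(β+1) * x) ≤ 0 := by linarith
    rw [ENNReal.ofReal_eq_zero.mpr e1, ENNReal.ofReal_eq_zero.mpr e2,
      ENNReal.ofReal_eq_zero.mpr e3, zero_add]
  · have h1 : Real.exp (-β * x) ≤ 1 := by
      rw [Real.exp_le_one_iff]; nlinarith
    have h2 : Real.exp (-x) ≤ 1 := by rw [Real.exp_le_one_iff]; linarith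
    have e1 : 0 ≤ 1 - Real.exp (-β * x) := by linarith
    have e2 : 0 ≤ Real.exp (-β * x) * (1 - Real.exp (-x)) := by
      nlinarith [Real.exp_pos (-β*x)]
    rw [← ENNReal.ofReal_add e1 e2]
    congr 1
    rw [hprod]; ring



lemma ext_of_moments (P Q : Measure ℝ) [IsFiniteMeasure P] [IsFiniteMeasure Q]
    (hP : P (Set.Icc (0:ℝ) 1)ᶜ = 0) (hQ : Q (Set.Icc (0:ℝ) 1)ᶜ = 0)
    (h : ∀ n : ℕ, ∫ x, x ^ n ∂P = ∫ x, x ^ n ∂Q) : P = Q := by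
  have haeP : ∀ᵐ x ∂P, x ∈ Set.Icc (0:ℝ) 1 := by
    rw [ae_iff]; convert hP using 2; rfl
  have haeQ : ∀ᵐ x ∂Q, x ∈ Set.Icc (0:ℝ) 1 := by
    rw [ae_iff]; convert hQ using 2; rfl
  have hmono : ∀ (R : Measure ℝ) [IsFiniteMeasure R], (∀ᵐ x ∂ R, x ∈ Set.Icc (0:ℝ) 1) →
      ∀ n : ℕ, Integrable (fun x : ℝ => x ^ n) R := by
    intro R _ hae n
    refine (integrable_const (1:ℝ)).mono' ((measurable_id.pow_const n).aestronglyMeasurable) ?_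
    filter_upwards [hae] with x hx
    rw [Real.norm_eq_abs, abs_pow]
    exact pow_le_one₀ (abs_nonneg x) (abs_le.mpr ⟨by linarith [hx.1], hx.2⟩)
  have hiP := hmono P haeP
  have hiQ := hmono Q haeQ
  have hpolyInt : ∀ (R : Measure ℝ) [IsFiniteMeasure R], (∀ᵐ x ∂ R, x ∈ Set.Icc (0:ℝ) 1) →
      ∀ p : Polynomial ℝ, Integrable (fun x => p.eval x) R := by
    intro R _ hae p
    have : (fun x : ℝ => p.eval x) =
        fun x => ∑ i ∈ Finset.range (p.natDegree + 1), p.coeff i * x ^ i := by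
      funext x; rw [Polynomial.eval_eq_sum_range]
    rw [this]
    exact integrable_finset_sum _ fun i _ => (hmono R hae i).const_mul _
  have hpoly : ∀ p : Polynomial ℝ, ∫ x, p.eval x ∂P = ∫ x, p.eval x ∂Q := by
    intro p
    simp_rw [Polynomial.eval_eq_sum_range]
    rw [integral_finset_sum _ fun i _ => (hiP i).const_mul _,
        integral_finset_sum _ fun i _ => (hiQ i).const_mul _]
    refine Finset.sum_congr rfl fun i _ => ?_
    rw [integral_const_mul, integral_const_mul, h i]
  have key : ∀ f : BoundedContinuousFunction ℝ ℝ, (∫ x, f x ∂P) = ∫ x, f x ∂Q := by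
    intro f
    have habs : ∀ ε : ℝ, 0 < ε →
        |∫ x, f x ∂P - ∫ x, f x ∂Q| ≤ ε * ((P Set.univ).toReal + (Q Set.univ).toReal) := by
      intro ε hε
      obtain ⟨p, hp⟩ := exists_polynomial_near_of_continuousOn 0 1 f
        f.continuous.continuousOn ε hε
      have hPd : ‖∫ x, (f x - p.eval x) ∂P‖ ≤ ε * (P Set.univ).toReal := by
        refine norm_integral_le_of_norm_le_const ?_
        filter_upwards [haeP] with x hx
        rw [Real.norm_eq_abs, abs_sub_comm]
        exact (hp x hx).le
      have hQd : ‖∫ x, (f x - p.eval x) ∂Q‖ ≤ ε * (Q Set.univ).toReal := by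
        refine norm_integral_le_of_norm_le_const ?_
        filter_upwards [haeQ] with x hx
        rw [Real.norm_eq_abs, abs_sub_comm]
        exact (hp x hx).le
      rw [integral_sub (f.integrable P) (hpolyInt P haeP p)] at hPd
      rw [integral_sub (f.integrable Q) (hpolyInt Q haeQ p)] at hQd
      rw [Real.norm_eq_abs] at hPd hQd
      have := hpoly p
      have habs2 : |∫ x, f x ∂P - ∫ x, f x ∂Q| ≤
          |∫ x, f x ∂P - ∫ x, p.eval x ∂P| + |∫ x, f x ∂Q - ∫ x, p.eval x ∂Q| := by
        rw [← this]
        have := abs_sub (∫ x, f x ∂P - ∫ x, p.eval x ∂P) (∫ x, f x ∂Q - ∫ x, p.eval x ∂P)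
        calc |∫ x, f x ∂P - ∫ x, f x ∂Q|
            = |(∫ x, f x ∂P - ∫ x, p.eval x ∂P) - (∫ x, f x ∂Q - ∫ x, p.eval x ∂P)| := by
              ring_nf
          _ ≤ _ := abs_sub _ _
      linarith [habs2, hPd, hQd]
    have hC : 0 ≤ (P Set.univ).toReal + (Q Set.univ).toReal := by positivity
    have h0 : |∫ x, f x ∂P - ∫ x, f x ∂Q| ≤ 0 := by
      refine le_of_forall_pos_le_add fun ε hε => ?_
      have h1 := habs (ε / ((P Set.univ).toReal + (Q Set.univ).toReal + 1))
        (by positivity)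
      have h2 : ε / ((P Set.univ).toReal + (Q Set.univ).toReal + 1) *
          ((P Set.univ).toReal + (Q Set.univ).toReal) ≤ ε := by
        rw [div_mul_eq_mul_div, div_le_iff₀ (by linarith)]
        nlinarith
      linarith
    have h1 : (∫ x, f x ∂P) - ∫ x, f x ∂Q = 0 :=
      abs_eq_zero.mp (le_antisymm h0 (abs_nonneg _))
    linarith
  apply ext_of_forall_lintegral_eq_of_IsFiniteMeasure
  intro f
  have hfin1 : (∫⁻ x, (f x : ℝ≥0∞) ∂P) ≠ ⊤ := (f.lintegral_lt_top_of_nnreal P).ne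
  have hfin2 : (∫⁻ x, (f x : ℝ≥0∞) ∂Q) ≠ ⊤ := (f.lintegral_lt_top_of_nnreal Q).ne
  rw [← ENNReal.toReal_eq_toReal_iff' hfin1 hfin2,
    BoundedContinuousFunction.toReal_lintegral_coe_eq_integral,
    BoundedContinuousFunction.toReal_lintegral_coe_eq_integral]
  exact key (f.comp ((↑) : ℝ≥0 → ℝ) isometry_subtype_coe.lipschitz)


lemma ae_mem_Ioi {μ : Measure ℝ} (hμs : μ (Set.Iic 0) = 0) :
    ∀ᵐ x ∂μ, x ∈ Set.Ioi (0:ℝ) := by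
  rw [ae_iff]
  convert hμs using 2
  ext x; simp

end BernsteinAux

/-- Uniqueness of the Bernstein-type Laplace transform: two Borel measures on `(0,∞)`
integrating `1 ∧ x` finitely and having the same integrals of `1 - e^{-βx}` for all
`β > 0` coincide. -/
theorem bernstein_laplace_uniqueness (μ ν : Measure ℝ)
    (hμs : μ (Set.Iic 0) = 0) (hνs : ν (Set.Iic 0) = 0)
    (hμ : ∫⁻ x in Set.Ioi (0:ℝ), ENNReal.ofReal (min 1 x) ∂μ < ⊤)
    (hν : ∫⁻ x in Set.Ioi (0:ℝ), ENNReal.ofReal (min 1 x) ∂ν < ⊤)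
    (h : ∀ β : ℝ, 0 < β →
      ∫⁻ x in Set.Ioi (0:ℝ), ENNReal.ofReal (1 - Real.exp (-β * x)) ∂μ =
      ∫⁻ x in Set.Ioi (0:ℝ), ENNReal.ofReal (1 - Real.exp (-β * x)) ∂ν) :
    μ = ν := by
  classical
  set g : ℝ → ℝ≥0∞ := fun x => ENNReal.ofReal (1 - Real.exp (-x)) with hg_def
  have hg_meas : Measurable g :=
    (measurable_const.sub (Real.measurable_exp.comp measurable_neg)).ennreal_ofReal
  have hμr := BernsteinAux.restrict_Ioi_eq_self hμs
  have hνr := BernsteinAux.restrict_Ioi_eq_self hνs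
  have h' : ∀ β : ℝ, 0 < β →
      (∫⁻ x, ENNReal.ofReal (1 - Real.exp (-β * x)) ∂μ) =
      ∫⁻ x, ENNReal.ofReal (1 - Real.exp (-β * x)) ∂ν := by
    intro β hβ
    have := h β hβ
    rwa [hμr, hνr] at this
  have hmβ : ∀ β : ℝ, Measurable fun x : ℝ => ENNReal.ofReal (1 - Real.exp (-β * x)) :=
    fun β => (measurable_const.sub
      (Real.measurable_exp.comp (measurable_id.const_mul (-β)))).ennreal_ofReal
  have hνfin : ∀ β : ℝ, 0 < β →
      (∫⁻ x, ENNReal.ofReal (1 - Real.exp (-β * x)) ∂ν) ≠ ⊤ :=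
    fun β hβ => (BernsteinAux.lintegral_one_sub_exp_lt_top hνs hν hβ).ne
  -- equality of Laplace transforms of the finite measures
  have hE : ∀ β : ℝ, 0 < β →
      (∫⁻ x, ENNReal.ofReal (Real.exp (-β * x) * (1 - Real.exp (-x))) ∂μ) =
      ∫⁻ x, ENNReal.ofReal (Real.exp (-β * x) * (1 - Real.exp (-x))) ∂ν := by
    intro β hβ
    have hsplit : ∀ ρ : Measure ℝ,
        (∫⁻ x, ENNReal.ofReal (1 - Real.exp (-β * x)) ∂ρ) +
        (∫⁻ x, ENNReal.ofReal (Real.exp (-β * x) * (1 - Real.exp (-x))) ∂ρ) =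
        ∫⁻ x, ENNReal.ofReal (1 - Real.exp (-(β + 1) * x)) ∂ρ := by
      intro ρ
      rw [← lintegral_add_left (hmβ β)]
      exact lintegral_congr fun x => BernsteinAux.pointwise_split hβ x
    have h1 := hsplit μ
    rw [h' β hβ, h' (β + 1) (by linarith), ← hsplit ν] at h1
    exact (ENNReal.add_right_inj (hνfin β hβ)).mp h1
  -- the finite measures
  have hwd : ∀ ρ : Measure ℝ, (ρ.withDensity g) Set.univ =
      ∫⁻ x, ENNReal.ofReal (1 - Real.exp (-(1:ℝ) * x)) ∂ρ := by
    intro ρ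
    rw [withDensity_apply _ MeasurableSet.univ, Measure.restrict_univ]
    apply lintegral_congr fun x => ?_
    rw [hg_def]
    norm_num
  haveI hμ₁fin : IsFiniteMeasure (μ.withDensity g) := by
    constructor
    rw [hwd μ]
    exact BernsteinAux.lintegral_one_sub_exp_lt_top hμs hμ one_pos
  haveI hν₁fin : IsFiniteMeasure (ν.withDensity g) := by
    constructor
    rw [hwd ν]
    exact BernsteinAux.lintegral_one_sub_exp_lt_top hνs hν one_pos
  -- Laplace transform in exponential form
  have hLap : ∀ n : ℕ,
      (∫⁻ x, ENNReal.ofReal (Real.exp (-x) ^ n) ∂(μ.withDensity g)) =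
      ∫⁻ x, ENNReal.ofReal (Real.exp (-x) ^ n) ∂(ν.withDensity g) := by
    intro n
    have hfn : Measurable fun x : ℝ => ENNReal.ofReal (Real.exp (-x) ^ n) :=
      ((Real.measurable_exp.comp measurable_neg).pow_const n).ennreal_ofReal
    rw [lintegral_withDensity_eq_lintegral_mul μ hg_meas hfn,
        lintegral_withDensity_eq_lintegral_mul ν hg_meas hfn]
    have hpt : ∀ x : ℝ, (g * fun x => ENNReal.ofReal (Real.exp (-x) ^ n)) x =
        ENNReal.ofReal (Real.exp (-(n:ℝ) * x) * (1 - Real.exp (-x))) := by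
      intro x
      have hexp : Real.exp (-x) ^ n = Real.exp (-(n:ℝ) * x) := by
        rw [← Real.exp_nat_mul]
        ring_nf
      simp only [Pi.mul_apply, hg_def, hexp]
      rw [ENNReal.ofReal_mul (Real.exp_nonneg _), mul_comm]
    rw [lintegral_congr hpt, lintegral_congr hpt]
    rcases Nat.eq_zero_or_pos n with hn | hn
    · subst hn
      have h0 : ∀ x : ℝ, ENNReal.ofReal (Real.exp (-((0:ℕ):ℝ) * x) * (1 - Real.exp (-x))) =
          ENNReal.ofReal (1 - Real.exp (-(1:ℝ) * x)) := by
        intro x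
        norm_num
      rw [lintegral_congr h0, lintegral_congr h0]
      exact h' 1 one_pos
    · exact hE (n : ℝ) (by exact_mod_cast hn)
  -- push forward under x ↦ exp (-x)
  have he : Measurable fun x : ℝ => Real.exp (-x) := Real.measurable_exp.comp measurable_neg
  have hIic : ∀ ρ : Measure ℝ, ρ (Set.Iic 0) = 0 → (ρ.withDensity g) (Set.Iic 0) = 0 := by
    intro ρ hρ
    rw [withDensity_apply _ measurableSet_Iic, Measure.restrict_eq_zero.mpr hρ,
      lintegral_zero_measure]
  have hsupp : ∀ ρ : Measure ℝ, ρ (Set.Iic 0) = 0 →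
      ((ρ.withDensity g).map (fun x => Real.exp (-x))) (Set.Icc (0:ℝ) 1)ᶜ = 0 := by
    intro ρ hρ
    rw [Measure.map_apply he measurableSet_Icc.compl]
    refine measure_mono_null ?_ (hIic ρ hρ)
    intro x hx
    simp only [Set.mem_preimage, Set.mem_compl_iff, Set.mem_Icc, not_and, not_le] at hx
    have h1 : 1 < Real.exp (-x) := hx (Real.exp_nonneg _)
    have h2 : 0 < -x := Real.one_lt_exp_iff.mp h1
    simp only [Set.mem_Iic]
    linarith
  haveI : IsFiniteMeasure ((μ.withDensity g).map (fun x => Real.exp (-x))) :=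
    Measure.isFiniteMeasure_map _ _
  haveI : IsFiniteMeasure ((ν.withDensity g).map (fun x => Real.exp (-x))) :=
    Measure.isFiniteMeasure_map _ _
  -- moments of the pushforwards agree
  have hmom : ∀ n : ℕ,
      (∫ t, t ^ n ∂((μ.withDensity g).map (fun x => Real.exp (-x)))) =
      ∫ t, t ^ n ∂((ν.withDensity g).map (fun x => Real.exp (-x))) := by
    intro n
    have hint : ∀ ρ : Measure ℝ, ρ (Set.Iic 0) = 0 →
        (∫ t, t ^ n ∂((ρ.withDensity g).map (fun x => Real.exp (-x)))) =
        (∫⁻ t, ENNReal.ofReal (t ^ n)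
          ∂((ρ.withDensity g).map (fun x => Real.exp (-x)))).toReal := by
      intro ρ hρ
      have hae : ∀ᵐ t ∂((ρ.withDensity g).map (fun x => Real.exp (-x))), t ∈ Set.Icc (0:ℝ) 1 := by
        rw [ae_iff]
        convert hsupp ρ hρ using 2; rfl
      rw [integral_eq_lintegral_of_nonneg_ae
        (by filter_upwards [hae] with t ht; exact pow_nonneg ht.1 n)
        ((continuous_pow n).aestronglyMeasurable)]
    have hlin : ∀ ρ : Measure ℝ,
        (∫⁻ t, ENNReal.ofReal (t ^ n) ∂((ρ.withDensity g).map (fun x => Real.exp (-x)))) =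
        ∫⁻ x, ENNReal.ofReal (Real.exp (-x) ^ n) ∂(ρ.withDensity g) := by
      intro ρ
      rw [lintegral_map ((continuous_pow n).measurable.ennreal_ofReal) he]
    rw [hint μ hμs, hint ν hνs, hlin μ, hlin ν, hLap n]
  -- the pushforwards agree
  have hmapeq : (μ.withDensity g).map (fun x => Real.exp (-x)) =
      (ν.withDensity g).map (fun x => Real.exp (-x)) :=
    BernsteinAux.ext_of_moments _ _ (hsupp μ hμs) (hsupp ν hνs) hmom
  -- invert the map
  have hl : Measurable fun t : ℝ => -Real.log t := Real.measurable_log.neg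
  have hback : ∀ ρ : Measure ℝ,
      ((ρ.withDensity g).map (fun x => Real.exp (-x))).map (fun t => -Real.log t)
        = ρ.withDensity g := by
    intro ρ
    rw [Measure.map_map hl he]
    have : ((fun t => -Real.log t) ∘ fun x => Real.exp (-x)) = id := by
      funext x
      simp [Real.log_exp]
    rw [this, Measure.map_id]
  have hwdeq : μ.withDensity g = ν.withDensity g := by
    rw [← hback μ, ← hback ν, hmapeq]
  -- invert the density
  have hinv : ∀ ρ : Measure ℝ, ρ (Set.Iic 0) = 0 →
      (ρ.withDensity g).withDensity g⁻¹ = ρ := by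
    intro ρ hρ
    refine withDensity_inv_same hg_meas ?_ (ae_of_all _ fun x => ENNReal.ofReal_ne_top)
    filter_upwards [BernsteinAux.ae_mem_Ioi hρ] with x hx
    rw [hg_def]
    simp only [ne_eq, ENNReal.ofReal_eq_zero, not_le, sub_pos]
    exact Real.exp_lt_one_iff.mpr (by simpa using hx) |>.trans_le le_rfl
  rw [← hinv μ hμs, ← hinv ν hνs, hwdeq]
end

section
/- Let $\alpha > 0$, $a < b$ reals, $f \in C([a,b])$, and let $U^B_\alpha f(x) = \int_a^b \frac{1}{\sqrt{2\alpha}} e^{-\sqrt{2\alpha}|y-x|} f(y)\,dy$ (extending $f$ by $0$ outside $[a,b]$). Define $u(x) = U^B_\alpha f(x) - \frac{\sinh(\sqrt{2\alpha}(b-x))}{\sinh(\sqrt{2\alpha}(b-a))} U^B_\alpha f(a) - \frac{\sinh(\sqrt{2\alpha}(x-a))}{\sinh(\sqrt{2\alpha}(b-a))} U^B_\alpha f(b)$ for $x \in [a,b]$. Then $u(a) = u(b) = 0$, $u$ is twice continuously differentiable on $[a,b]$, and $u''(x) = 2(\alpha u(x) - f(x))$ for all $x \in [a,b]$. -/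
open MeasureTheory

/-- The Dirichlet resolvent on `[a,b]`: with `U^B_α f(x) = ∫_a^b (1/√(2α)) e^{-√(2α)|y-x|} f(y) dy`
and `u(x) = U^B_α f(x) - sinh(√(2α)(b-x))/sinh(√(2α)(b-a)) · U^B_α f(a)
- sinh(√(2α)(x-a))/sinh(√(2α)(b-a)) · U^B_α f(b)`, one has `u(a) = u(b) = 0`,
`u` is twice continuously differentiable on `[a,b]`,
and `u'' = 2(α u - f)` on `[a,b]`. -/
theorem dirichlet_resolvent_interval (α a b : ℝ) (hα : 0 < α) (hab : a < b)
    (f : ℝ → ℝ) (hf : ContinuousOn f (Set.Icc a b))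
    (UB u : ℝ → ℝ)
    (hUB : ∀ x, UB x = ∫ y in Set.Icc a b,
        (1 / Real.sqrt (2 * α)) * Real.exp (-(Real.sqrt (2 * α)) * |y - x|) * f y)
    (hu : ∀ x, u x = UB x
        - Real.sinh (Real.sqrt (2 * α) * (b - x)) /
            Real.sinh (Real.sqrt (2 * α) * (b - a)) * UB a
        - Real.sinh (Real.sqrt (2 * α) * (x - a)) /
            Real.sinh (Real.sqrt (2 * α) * (b - a)) * UB b) :
    u a = 0 ∧ u b = 0 ∧ ContDiffOn ℝ 2 u (Set.Icc a b) ∧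
    ∀ x ∈ Set.Icc a b, iteratedDerivWithin 2 u (Set.Icc a b) x = 2 * (α * u x - f x) := by
  set c : ℝ := Real.sqrt (2 * α) with hcdef
  have h2α : (0:ℝ) < 2 * α := by linarith
  have hc : 0 < c := Real.sqrt_pos.mpr h2α
  have hc2 : c ^ 2 = 2 * α := Real.sq_sqrt h2α.le
  set g : ℝ → ℝ := Set.IccExtend hab.le ((Set.Icc a b).restrict f) with hgdef
  have hgc : Continuous g := hf.restrict.Icc_extend'
  have hgf : ∀ x ∈ Set.Icc a b, g x = f x := by
    intro x hx
    rw [hgdef, Set.IccExtend_of_mem hab.le _ hx]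
    rfl
  set F : ℝ → ℝ := fun x => ∫ t in a..x, Real.exp (c * t) * g t with hFdef
  set G : ℝ → ℝ := fun x => ∫ t in x..b, Real.exp (-(c * t)) * g t with hGdef
  have hcont1 : Continuous fun t => Real.exp (c * t) * g t :=
    (Real.continuous_exp.comp (continuous_const.mul continuous_id)).mul hgc
  have hcont2 : Continuous fun t => Real.exp (-(c * t)) * g t :=
    (Real.continuous_exp.comp (continuous_const.mul continuous_id).neg).mul hgc
  have hF : ∀ x, HasDerivAt F (Real.exp (c * x) * g x) x := fun x =>
    (hcont1.integral_hasStrictDerivAt a x).hasDerivAt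
  have hG : ∀ x, HasDerivAt G (-(Real.exp (-(c * x)) * g x)) x := by
    intro x
    have h := ((hcont2.integral_hasStrictDerivAt b x).hasDerivAt).neg
    have hGe : G = fun u => -∫ t in b..u, Real.exp (-(c * t)) * g t := by
      funext u
      rw [hGdef]
      exact intervalIntegral.integral_symm b u
    rw [hGe]
    exact h
  set V : ℝ → ℝ := fun x => (1/c) * (Real.exp (-(c*x)) * F x + Real.exp (c*x) * G x)
    with hVdef
  -- UB = V on [a,b]
  have hUV : ∀ x ∈ Set.Icc a b, UB x = V x := by
    intro x hx
    obtain ⟨hax, hxb⟩ := hx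
    have hint : ∀ p q : ℝ, IntervalIntegrable
        (fun y => 1 / c * Real.exp (-c * |y - x|) * g y) volume p q := fun p q =>
      ((continuous_const.mul (Real.continuous_exp.comp
        (continuous_const.mul (continuous_id.sub continuous_const).abs))).mul
          hgc).intervalIntegrable p q
    have efg : (∫ y in Set.Ioc a b, 1 / c * Real.exp (-c * |y - x|) * f y)
        = ∫ y in Set.Ioc a b, 1 / c * Real.exp (-c * |y - x|) * g y :=
      setIntegral_congr_fun measurableSet_Ioc (fun y hy => by
        rw [hgf y ⟨hy.1.le, hy.2⟩])
    have e1 : UB x = ∫ y in a..b, 1 / c * Real.exp (-c * |y - x|) * g y := by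
      rw [hUB x, MeasureTheory.integral_Icc_eq_integral_Ioc, efg,
        ← intervalIntegral.integral_of_le hab.le]
    have e2 : (∫ y in a..b, 1 / c * Real.exp (-c * |y - x|) * g y)
        = (∫ y in a..x, 1 / c * Real.exp (-c * |y - x|) * g y)
        + ∫ y in x..b, 1 / c * Real.exp (-c * |y - x|) * g y :=
      (intervalIntegral.integral_add_adjacent_intervals (hint a x) (hint x b)).symm
    have e3 : (∫ y in a..x, 1 / c * Real.exp (-c * |y - x|) * g y)
        = 1 / c * Real.exp (-(c*x)) * F x := by
      simp only [hFdef]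
      rw [show (1 / c * Real.exp (-(c*x)) * ∫ t in a..x, Real.exp (c * t) * g t)
          = ∫ t in a..x, 1 / c * Real.exp (-(c*x)) * (Real.exp (c * t) * g t) from
        (intervalIntegral.integral_const_mul _ _).symm]
      apply intervalIntegral.integral_congr
      intro y hy
      rw [Set.uIcc_of_le hax] at hy
      have h1 : |y - x| = x - y := by
        rw [abs_of_nonpos (by linarith [hy.2])]; ring
      have h2 : Real.exp (-c * (x - y)) = Real.exp (-(c*x)) * Real.exp (c * y) := by
        rw [← Real.exp_add]; ring_nf
      simp only [h1, h2]; ring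
    have e4 : (∫ y in x..b, 1 / c * Real.exp (-c * |y - x|) * g y)
        = 1 / c * Real.exp (c*x) * G x := by
      simp only [hGdef]
      rw [show (1 / c * Real.exp (c*x) * ∫ t in x..b, Real.exp (-(c * t)) * g t)
          = ∫ t in x..b, 1 / c * Real.exp (c*x) * (Real.exp (-(c * t)) * g t) from
        (intervalIntegral.integral_const_mul _ _).symm]
      apply intervalIntegral.integral_congr
      intro y hy
      rw [Set.uIcc_of_le hxb] at hy
      have h1 : |y - x| = y - x := abs_of_nonneg (by linarith [hy.1])
      have h2 : Real.exp (-c * (y - x)) = Real.exp (c*x) * Real.exp (-(c * y)) := by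
        rw [← Real.exp_add]; ring_nf
      simp only [h1, h2]; ring
    rw [e1, e2, e3, e4, hVdef]
    ring
  set V1 : ℝ → ℝ := fun x => -(Real.exp (-(c*x)) * F x) + Real.exp (c*x) * G x with hV1def
  have hEm : ∀ x : ℝ, HasDerivAt (fun x => Real.exp (-(c*x))) (-c * Real.exp (-(c*x))) x := by
    intro x
    have h1 : HasDerivAt (fun x : ℝ => -(c*x)) (-c) x := by
      simpa using (hasDerivAt_id x).const_mul (-c)
    simpa [mul_comm] using h1.exp
  have hEp : ∀ x : ℝ, HasDerivAt (fun x => Real.exp (c*x)) (c * Real.exp (c*x)) x := by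
    intro x
    have h1 : HasDerivAt (fun x : ℝ => c*x) c x := by
      simpa using (hasDerivAt_id x).const_mul c
    simpa [mul_comm] using h1.exp
  have hexp : ∀ x : ℝ, Real.exp (-(c*x)) * Real.exp (c*x) = 1 := by
    intro x; rw [← Real.exp_add]; simp
  have hVd : ∀ x, HasDerivAt V (V1 x) x := by
    intro x
    have h := (((hEm x).mul (hF x)).add ((hEp x).mul (hG x))).const_mul (1/c)
    rw [hVdef]
    refine h.congr_deriv (Eq.symm ?_)
    simp only [hV1def]
    field_simp
    ring
  have hVc : ∀ x, c^2 * V x = c * (Real.exp (-(c*x)) * F x + Real.exp (c*x) * G x) := by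
    intro x
    rw [hVdef]
    simp only
    field_simp
  have hV1d : ∀ x, HasDerivAt V1 (c^2 * V x - 2 * g x) x := by
    intro x
    have h := (((hEm x).mul (hF x)).neg).add ((hEp x).mul (hG x))
    rw [hV1def]
    refine h.congr_deriv (Eq.symm ?_)
    rw [hVc x]
    linear_combination (2 * g x) * hexp x
  set S : ℝ := Real.sinh (c * (b - a)) with hSdef
  have hS : 0 < S := by
    rw [hSdef]; exact Real.sinh_pos_iff.mpr (mul_pos hc (by linarith))
  set w : ℝ → ℝ := fun x => V x - Real.sinh (c * (b - x)) / S * UB a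
      - Real.sinh (c * (x - a)) / S * UB b with hwdef
  set w1 : ℝ → ℝ := fun x => V1 x + c * Real.cosh (c * (b - x)) / S * UB a
      - c * Real.cosh (c * (x - a)) / S * UB b with hw1def
  have hin1 : ∀ x : ℝ, HasDerivAt (fun x : ℝ => c * (b - x)) (-c) x := by
    intro x; simpa using ((hasDerivAt_id x).const_sub b).const_mul c
  have hin2 : ∀ x : ℝ, HasDerivAt (fun x : ℝ => c * (x - a)) c x := by
    intro x; simpa using ((hasDerivAt_id x).sub_const a).const_mul c
  have hwd : ∀ x, HasDerivAt w (w1 x) x := by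
    intro x
    have h1 : HasDerivAt (fun x => Real.sinh (c * (b - x)) / S * UB a)
        (Real.cosh (c * (b - x)) * -c / S * UB a) x :=
      (((hin1 x).sinh).div_const S).mul_const (UB a)
    have h2 : HasDerivAt (fun x => Real.sinh (c * (x - a)) / S * UB b)
        (Real.cosh (c * (x - a)) * c / S * UB b) x :=
      (((hin2 x).sinh).div_const S).mul_const (UB b)
    have h := ((hVd x).sub h1).sub h2
    rw [hwdef]
    refine h.congr_deriv (Eq.symm ?_)
    simp only [hw1def]
    ring
  have hw1d : ∀ x, HasDerivAt w1 (c^2 * w x - 2 * g x) x := by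
    intro x
    have h1 : HasDerivAt (fun x => c * Real.cosh (c * (b - x)) / S * UB a)
        (c * (Real.sinh (c * (b - x)) * -c) / S * UB a) x :=
      ((((hin1 x).cosh).const_mul c).div_const S).mul_const (UB a)
    have h2 : HasDerivAt (fun x => c * Real.cosh (c * (x - a)) / S * UB b)
        (c * (Real.sinh (c * (x - a)) * c) / S * UB b) x :=
      ((((hin2 x).cosh).const_mul c).div_const S).mul_const (UB b)
    have h := ((hV1d x).add h1).sub h2
    rw [hw1def]
    refine h.congr_deriv (Eq.symm ?_)
    simp only [hwdef]
    ring
  have hequw : Set.EqOn u w (Set.Icc a b) := by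
    intro x hx
    rw [hu x, hUV x hx]
  have hUD : UniqueDiffOn ℝ (Set.Icc a b) := uniqueDiffOn_Icc hab
  have hud : ∀ x ∈ Set.Icc a b, HasDerivWithinAt u (w1 x) (Set.Icc a b) x := fun x hx =>
    ((hwd x).hasDerivWithinAt).congr hequw (hequw hx)
  have hderivu : ∀ x ∈ Set.Icc a b, derivWithin u (Set.Icc a b) x = w1 x := fun x hx =>
    (hud x hx).derivWithin (hUD x hx)
  have hu2 : ∀ x ∈ Set.Icc a b,
      HasDerivWithinAt w1 (2 * (α * u x - f x)) (Set.Icc a b) x := by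
    intro x hx
    have h := (hw1d x).hasDerivWithinAt (s := Set.Icc a b)
    have he : c^2 * w x - 2 * g x = 2 * (α * u x - f x) := by
      rw [hc2, ← hequw hx, hgf x hx]; ring
    rwa [he] at h
  refine ⟨?_, ?_, ?_, ?_⟩
  · rw [hu a, show c * (a - a) = 0 by ring, Real.sinh_zero, ← hSdef, div_self hS.ne']
    ring
  · rw [hu b, show c * (b - b) = 0 by ring, Real.sinh_zero, ← hSdef, div_self hS.ne']
    ring
  · have hiff := contDiffOn_succ_iff_derivWithin (𝕜 := ℝ) (n := 1) (f := u) hUD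
    rw [show ((1 : WithTop ℕ∞) + 1) = 2 by norm_num] at hiff
    refine hiff.mpr ⟨fun x hx => (hud x hx).differentiableWithinAt, by simp, ?_⟩
    have hc1 : ContDiffOn ℝ 1 w1 (Set.Icc a b) := by
      have hiff0 := contDiffOn_succ_iff_derivWithin (𝕜 := ℝ) (n := 0) (f := w1) hUD
      rw [zero_add] at hiff0
      refine hiff0.mpr ⟨fun x hx => ((hw1d x).differentiableAt).differentiableWithinAt,
        by simp, ?_⟩
      rw [contDiffOn_zero]
      have hcu : ContinuousOn u (Set.Icc a b) := fun x hx =>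
        (hud x hx).differentiableWithinAt.continuousWithinAt
      have hcont : ContinuousOn (fun x => 2 * (α * u x - f x)) (Set.Icc a b) :=
        continuousOn_const.mul ((continuousOn_const.mul hcu).sub hf)
      exact hcont.congr (fun x hx => (hu2 x hx).derivWithin (hUD x hx))
    exact hc1.congr hderivu
  · intro x hx
    rw [show (2:ℕ) = 1 + 1 from rfl, iteratedDerivWithin_succ]
    have heq : Set.EqOn (iteratedDerivWithin 1 u (Set.Icc a b)) w1 (Set.Icc a b) := by
      intro y hy
      rw [iteratedDerivWithin_one, hderivu y hy]
    rw [derivWithin_congr heq (heq hx)]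
    exact (hu2 x hx).derivWithin (hUD x hx)
end

section
/- Let $\alpha > 0$, $f \in C_0([0,\infty))$, and define $u(x) = U^B_\alpha f(x) - e^{-\sqrt{2\alpha}\,x}\, U^B_\alpha f(0)$ on $[0,\infty)$, where $U^B_\alpha f(x) = \int_0^\infty \frac{1}{\sqrt{2\alpha}} e^{-\sqrt{2\alpha}|y-x|} f(y)\,dy$. Then $u(0) = 0$, $u$ is twice continuously differentiable, $u''(x) = 2(\alpha u(x) - f(x))$, and $u''(0) = -2 f(0)$. -/
open MeasureTheory Filter

private lemma dirichlet_alg1 (c E1 E2 a b U Fx : ℝ) (hc0 : c ≠ 0) :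
    1/c * (-c * E1 * a + E1 * (E2 * Fx)) + 1/c * (c * E2 * b + E2 * (0 - E1 * Fx))
      - -c * E1 * U = -(E1 * a) + E2 * b + c * (E1 * U) := by
  field_simp; ring

private lemma dirichlet_alg2 (c α E1 E2 a b U Fx : ℝ) (hc0 : c ≠ 0) (hp : E1 * E2 = 1)
    (hc2 : c * c = 2 * α) :
    2 * (α * (1/c * E1 * a + 1/c * E2 * b - E1 * U) - Fx) =
      -(-c * E1 * a + E1 * (E2 * Fx)) + (c * E2 * b + E2 * (0 - E1 * Fx)) + c * (-c * E1 * U) := by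
  field_simp
  linear_combination (c * Fx * 2) * hp + (-(E1 * a) - E2 * b + c * E1 * U) * hc2

/-- The Dirichlet resolvent on the half line: with
`U^B_α f(x) = ∫_0^∞ (1/√(2α)) e^{-√(2α)|y-x|} f(y) dy` and
`u(x) = U^B_α f(x) - e^{-√(2α) x} U^B_α f(0)`, one has `u(0) = 0`, `u` is twice
continuously differentiable, `u'' = 2(α u - f)`, and `u''(0) = -2 f(0)`. -/
theorem dirichlet_resolvent_halfline (α : ℝ) (hα : 0 < α) (f : ℝ → ℝ)
    (hf : ContinuousOn f (Set.Ici 0)) (hf0 : Tendsto f atTop (nhds 0))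
    (UB u : ℝ → ℝ)
    (hUB : ∀ x, UB x = ∫ y in Set.Ioi (0:ℝ),
        (1 / Real.sqrt (2 * α)) * Real.exp (-(Real.sqrt (2 * α)) * |y - x|) * f y)
    (hu : ∀ x, u x = UB x - Real.exp (-(Real.sqrt (2 * α)) * x) * UB 0) :
    u 0 = 0 ∧ ContDiffOn ℝ 2 u (Set.Ici 0) ∧
    (∀ x ∈ Set.Ici (0:ℝ),
      iteratedDerivWithin 2 u (Set.Ici 0) x = 2 * (α * u x - f x)) ∧
    iteratedDerivWithin 2 u (Set.Ici 0) 0 = -2 * f 0 := by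
  set c := Real.sqrt (2 * α) with hcdef
  have hc : 0 < c := Real.sqrt_pos.mpr (by linarith)
  have hc2 : c * c = 2 * α := Real.mul_self_sqrt (by linarith)
  -- extend f continuously to all of ℝ
  set F : ℝ → ℝ := fun y => f (max y 0) with hFdef
  have hF : Continuous F :=
    hf.comp_continuous (continuous_id.max continuous_const) (fun y => le_max_right y 0)
  have hFf : ∀ y, 0 ≤ y → F y = f y := fun y hy => by simp [hFdef, max_eq_left hy]
  -- F is bounded
  obtain ⟨N, hN⟩ := (Metric.tendsto_atTop.mp hf0) 1 one_pos
  obtain ⟨C, hC⟩ :=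
    (isCompact_Icc : IsCompact (Set.Icc (0:ℝ) (max N 0))).exists_bound_of_continuousOn
      hF.continuousOn
  set M := max C 1 with hMdef
  have hM : ∀ y, |F y| ≤ M := by
    intro y
    rcases le_total y (max N 0) with h | h
    · have h0 : max y 0 ∈ Set.Icc (0:ℝ) (max N 0) :=
        ⟨le_max_right _ _, max_le h (le_max_right N 0)⟩
      have hFy : F (max y 0) = F y := by
        simp only [hFdef]
        rw [max_eq_left (le_max_right y 0)]
      have := hC _ h0
      rw [Real.norm_eq_abs, hFy] at this
      exact le_trans this (le_max_left C 1)
    · have hy0 : (0:ℝ) ≤ y := le_trans (le_max_right N 0) h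
      have h1 : |f y| < 1 := by
        have := hN y (le_trans (le_max_left N 0) h)
        rwa [Real.dist_eq, sub_zero] at this
      rw [hFf y hy0]
      exact le_trans h1.le (le_max_right C 1)
  -- integrability of the exponentially decaying integrand
  have hcont_e : Continuous (fun y => Real.exp (-c * y) * F y) :=
    ((Real.continuous_exp.comp (continuous_const.mul continuous_id)).mul hF)
  have hexp : ∀ a : ℝ, IntegrableOn (fun y => Real.exp (-c * y) * F y) (Set.Ioi a) := by
    intro a
    refine Integrable.mono' ((exp_neg_integrableOn_Ioi a hc).const_mul M)
      hcont_e.aestronglyMeasurable.restrict ?_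
    filter_upwards with y
    rw [Real.norm_eq_abs, abs_mul, Real.abs_exp]
    calc Real.exp (-c * y) * |F y| ≤ Real.exp (-c * y) * M := by
          exact mul_le_mul_of_nonneg_left (hM y) (Real.exp_nonneg _)
      _ = M * Real.exp (-c * y) := mul_comm _ _
  -- building blocks
  set A : ℝ → ℝ := fun x => ∫ y in (0:ℝ)..x, Real.exp (c * y) * F y with hAdef
  set D : ℝ → ℝ := fun x => ∫ y in (0:ℝ)..x, Real.exp (-c * y) * F y with hDdef
  set B0 : ℝ := ∫ y in Set.Ioi (0:ℝ), Real.exp (-c * y) * F y with hB0def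
  have hAd : ∀ x, HasDerivAt A (Real.exp (c * x) * F x) x := fun x =>
    (((Real.continuous_exp.comp (continuous_const.mul continuous_id)).mul
      hF).integral_hasStrictDerivAt 0 x).hasDerivAt
  have hDd : ∀ x, HasDerivAt D (Real.exp (-c * x) * F x) x := fun x =>
    (hcont_e.integral_hasStrictDerivAt 0 x).hasDerivAt
  -- splitting of the half-line integral
  have hsplit : ∀ x : ℝ, 0 ≤ x → (∫ y in Set.Ioi (0:ℝ), Real.exp (-c * y) * F y) =
      (∫ y in Set.Ioc 0 x, Real.exp (-c * y) * F y)
        + ∫ y in Set.Ioi x, Real.exp (-c * y) * F y := by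
    intro x hx
    rw [← Set.Ioc_union_Ioi_eq_Ioi hx,
      MeasureTheory.setIntegral_union (Set.Ioc_disjoint_Ioi le_rfl) measurableSet_Ioi
        ((hexp 0).mono_set Set.Ioc_subset_Ioi_self) (hexp x)]
  -- key formula for UB on [0,∞)
  have hKey : ∀ x : ℝ, 0 ≤ x → UB x =
      (1/c) * (Real.exp (-c * x) * A x) + (1/c) * (Real.exp (c * x) * (B0 - D x)) := by
    intro x hx
    have hFeq : Set.EqOn (fun y => (1/c) * Real.exp (-c * |y - x|) * f y)
        (fun y => (1/c) * Real.exp (-c * |y - x|) * F y) (Set.Ioi 0) := fun y hy => by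
      simp only [hFf y (le_of_lt hy)]
    have hg : Continuous (fun y => (1/c) * Real.exp (-c * |y - x|) * F y) :=
      ((continuous_const.mul (Real.continuous_exp.comp
        (continuous_const.mul (continuous_id.sub continuous_const).abs))).mul hF)
    have hg1 : IntegrableOn (fun y => (1/c) * Real.exp (-c * |y - x|) * F y) (Set.Ioc 0 x) :=
      (hg.continuousOn.integrableOn_Icc).mono_set Set.Ioc_subset_Icc_self
    have heq2 : Set.EqOn (fun y => (1/c) * Real.exp (-c * |y - x|) * F y)
        (fun y => ((1/c) * Real.exp (c * x)) * (Real.exp (-c * y) * F y)) (Set.Ioi x) := by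
      intro y hy
      have h1 : |y - x| = y - x := abs_of_pos (sub_pos.mpr hy)
      simp only [h1]
      have hee : Real.exp (-c * (y - x)) = Real.exp (c * x) * Real.exp (-c * y) := by
        rw [← Real.exp_add]; congr 1; ring
      rw [hee]; ring
    have hg2 : IntegrableOn (fun y => (1/c) * Real.exp (-c * |y - x|) * F y) (Set.Ioi x) := by
      have h' : IntegrableOn
          (fun y => ((1/c) * Real.exp (c * x)) * (Real.exp (-c * y) * F y)) (Set.Ioi x) :=
        Integrable.const_mul (hexp x) _
      exact h'.congr_fun (fun y hy => (heq2 hy).symm) measurableSet_Ioi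
    have hIoc : (∫ y in Set.Ioc 0 x, (1/c) * Real.exp (-c * |y - x|) * F y)
        = (1/c) * (Real.exp (-c * x) * A x) := by
      have heq1 : Set.EqOn (fun y => (1/c) * Real.exp (-c * |y - x|) * F y)
          (fun y => ((1/c) * Real.exp (-c * x)) * (Real.exp (c * y) * F y)) (Set.Ioc 0 x) := by
        intro y hy
        have h1 : |y - x| = x - y := by
          rw [abs_of_nonpos (sub_nonpos.mpr hy.2), neg_sub]
        simp only [h1]
        have hee : Real.exp (-c * (x - y)) = Real.exp (-c * x) * Real.exp (c * y) := by
          rw [← Real.exp_add]; congr 1; ring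
        rw [hee]; ring
      rw [MeasureTheory.setIntegral_congr_fun measurableSet_Ioc heq1,
        MeasureTheory.integral_const_mul]
      have hAx : A x = ∫ y in Set.Ioc 0 x, Real.exp (c * y) * F y :=
        intervalIntegral.integral_of_le hx
      rw [← hAx]; ring
    have hIoi : (∫ y in Set.Ioi x, (1/c) * Real.exp (-c * |y - x|) * F y)
        = (1/c) * (Real.exp (c * x) * (B0 - D x)) := by
      rw [MeasureTheory.setIntegral_congr_fun measurableSet_Ioi heq2,
        MeasureTheory.integral_const_mul]
      have hDx : D x = ∫ y in Set.Ioc 0 x, Real.exp (-c * y) * F y :=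
        intervalIntegral.integral_of_le hx
      have hB : (∫ y in Set.Ioi x, Real.exp (-c * y) * F y) = B0 - D x := by
        have h1 := hsplit x hx
        rw [← hB0def] at h1
        rw [hDx]; linarith
      rw [hB]; ring
    calc UB x = ∫ y in Set.Ioi (0:ℝ), (1/c) * Real.exp (-c * |y - x|) * F y := by
          rw [hUB, MeasureTheory.setIntegral_congr_fun measurableSet_Ioi hFeq]
      _ = (∫ y in Set.Ioc 0 x, (1/c) * Real.exp (-c * |y - x|) * F y)
            + ∫ y in Set.Ioi x, (1/c) * Real.exp (-c * |y - x|) * F y := by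
          rw [← Set.Ioc_union_Ioi_eq_Ioi hx,
            MeasureTheory.setIntegral_union (Set.Ioc_disjoint_Ioi le_rfl) measurableSet_Ioi
              hg1 hg2]
      _ = _ := by rw [hIoc, hIoi]
  -- the smooth model function and its derivatives
  set v : ℝ → ℝ := fun x => (1/c) * (Real.exp (-c * x) * A x)
      + (1/c) * (Real.exp (c * x) * (B0 - D x)) - Real.exp (-c * x) * UB 0 with hvdef
  set v1 : ℝ → ℝ := fun x => -(Real.exp (-c * x) * A x) + Real.exp (c * x) * (B0 - D x)
      + c * (Real.exp (-c * x) * UB 0) with hv1def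
  have huv : Set.EqOn u v (Set.Ici 0) := by
    intro x hx
    rw [hu, hKey x hx]
  have he1 : ∀ x : ℝ, HasDerivAt (fun x => Real.exp (-c * x)) (-c * Real.exp (-c * x)) x := by
    intro x
    have h : HasDerivAt (fun x : ℝ => -c * x) (-c) x := by
      simpa using (hasDerivAt_id x).const_mul (-c)
    simpa [mul_comm] using h.exp
  have he2 : ∀ x : ℝ, HasDerivAt (fun x => Real.exp (c * x)) (c * Real.exp (c * x)) x := by
    intro x
    have h : HasDerivAt (fun x : ℝ => c * x) c x := by
      simpa using (hasDerivAt_id x).const_mul c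
    simpa [mul_comm] using h.exp
  have hprod : ∀ x : ℝ, Real.exp (-c * x) * Real.exp (c * x) = 1 := by
    intro x; rw [← Real.exp_add]; norm_num
  have hv1d : ∀ x, HasDerivAt v (v1 x) x := by
    intro x
    have h1 : HasDerivAt (fun x => Real.exp (-c * x) * A x)
        (-c * Real.exp (-c * x) * A x + Real.exp (-c * x) * (Real.exp (c * x) * F x)) x :=
      (he1 x).mul (hAd x)
    have h2 : HasDerivAt (fun x => Real.exp (c * x) * (B0 - D x))
        (c * Real.exp (c * x) * (B0 - D x)
          + Real.exp (c * x) * (0 - Real.exp (-c * x) * F x)) x :=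
      (he2 x).mul ((hasDerivAt_const x B0).sub (hDd x))
    have h3 : HasDerivAt (fun x => Real.exp (-c * x) * UB 0)
        (-c * Real.exp (-c * x) * UB 0) x := (he1 x).mul_const (UB 0)
    have := ((h1.const_mul (1/c)).add (h2.const_mul (1/c))).sub h3
    refine this.congr_deriv ?_
    symm
    simp only [hv1def]
    linear_combination (dirichlet_alg1 c (Real.exp (-c * x)) (Real.exp (c * x)) (A x)
      (B0 - D x) (UB 0) (F x) (ne_of_gt hc)).symm
  have hv2d : ∀ x, HasDerivAt v1 (2 * (α * v x - F x)) x := by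
    intro x
    have h1 : HasDerivAt (fun x => -(Real.exp (-c * x) * A x))
        (-(-c * Real.exp (-c * x) * A x + Real.exp (-c * x) * (Real.exp (c * x) * F x))) x :=
      ((he1 x).mul (hAd x)).neg
    have h2 : HasDerivAt (fun x => Real.exp (c * x) * (B0 - D x))
        (c * Real.exp (c * x) * (B0 - D x)
          + Real.exp (c * x) * (0 - Real.exp (-c * x) * F x)) x :=
      (he2 x).mul ((hasDerivAt_const x B0).sub (hDd x))
    have h3 : HasDerivAt (fun x => Real.exp (-c * x) * UB 0)
        (-c * Real.exp (-c * x) * UB 0) x := (he1 x).mul_const (UB 0)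
    have := (h1.add h2).add (h3.const_mul c)
    refine this.congr_deriv ?_
    symm
    simp only [hvdef]
    linear_combination dirichlet_alg2 c α (Real.exp (-c * x)) (Real.exp (c * x)) (A x)
      (B0 - D x) (UB 0) (F x) (ne_of_gt hc) (hprod x) hc2
  -- unique differentiability
  have hud : UniqueDiffOn ℝ (Set.Ici (0:ℝ)) := uniqueDiffOn_Ici 0
  -- derivatives within
  have hdvu : ∀ x ∈ Set.Ici (0:ℝ), HasDerivWithinAt u (v1 x) (Set.Ici 0) x := fun x hx =>
    ((hv1d x).hasDerivWithinAt).congr (fun y hy => huv hy) (huv hx)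
  have hderivWithin_u : Set.EqOn (derivWithin u (Set.Ici 0)) v1 (Set.Ici 0) := fun x hx =>
    (hdvu x hx).derivWithin (hud x hx)
  -- the second derivative formula
  have hmain : ∀ x ∈ Set.Ici (0:ℝ),
      iteratedDerivWithin 2 u (Set.Ici 0) x = 2 * (α * u x - f x) := by
    intro x hx
    rw [huv hx, ← hFf x hx]
    rw [show (2:ℕ) = 1 + 1 from rfl, iteratedDerivWithin_succ]
    have h1 : Set.EqOn (iteratedDerivWithin 1 u (Set.Ici 0)) v1 (Set.Ici 0) := by
      intro y hy
      rw [iteratedDerivWithin_one]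
      exact hderivWithin_u hy
    rw [derivWithin_congr h1 (h1 hx)]
    exact ((hv2d x).hasDerivWithinAt).derivWithin (hud x hx)
  -- u 0 = 0
  have hu0 : u 0 = 0 := by rw [hu]; simp
  -- smoothness
  have hdv : Differentiable ℝ v := fun x => (hv1d x).differentiableAt
  have hdv1 : Differentiable ℝ v1 := fun x => (hv2d x).differentiableAt
  have hdermv : deriv v = v1 := funext fun x => (hv1d x).deriv
  have hdermv1 : deriv v1 = fun x => 2 * (α * v x - F x) := funext fun x => (hv2d x).deriv
  have hvC2 : ContDiff ℝ 2 v := by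
    rw [show (2 : WithTop ℕ∞) = 1 + 1 by norm_num, contDiff_succ_iff_deriv]
    refine ⟨hdv, by simp, ?_⟩
    rw [hdermv, contDiff_one_iff_deriv, hdermv1]
    exact ⟨hdv1, continuous_const.mul ((continuous_const.mul hdv.continuous).sub hF)⟩
  have hC2 : ContDiffOn ℝ 2 u (Set.Ici 0) := (hvC2.contDiffOn).congr huv
  refine ⟨hu0, hC2, hmain, ?_⟩
  rw [hmain 0 Set.self_mem_Ici, hu0]
  ring
end
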